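/- Let C > 0 and c₀ ∈ ℝ, and let I = {t ∈ ℝ : t > c₀/(4·√(2C))}. Define f, h : I → ℝ by f(t) = √(C/2) (constant) and h(t) = √(4·√(2C)·t − c₀). Then h is differentiable on I with derivative h'(t) = 2·√(2C)/√(4·√(2C)·t − c₀), and the pair (f, h) satisfies both equations on I: (★) h'(t)·h(t)·f(t) − 2·f(t)² = C and (★★) −2·h(t)²·f(t)²·f'(t) + f(t)³·h(t)·h'(t) − 4·f(t)⁴ + 2·f(t)²·h(t)² = C·h(t)² (here f' ≡ 0). -/

import Mathlib

/-- For `C > 0`, the pair `f(t) = √(C/2)`, `h(t) = √(4√(2C)·t − c₀)` is a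
solution of the system (★), (★★) (with `f' ≡ 0`) on `{t : t > c₀/(4√(2C))}`,
with `h'(t) = 2√(2C)/√(4√(2C)·t − c₀)`. -/
theorem stmt_2 (C c₀ : ℝ) (hC : 0 < C) (f h : ℝ → ℝ)
    (hf : ∀ t, f t = Real.sqrt (C / 2))
    (hh : ∀ t, h t = Real.sqrt (4 * Real.sqrt (2 * C) * t - c₀)) :
    ∀ t : ℝ, c₀ / (4 * Real.sqrt (2 * C)) < t →
      HasDerivAt h (2 * Real.sqrt (2 * C) / Real.sqrt (4 * Real.sqrt (2 * C) * t - c₀)) t ∧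
      (2 * Real.sqrt (2 * C) / Real.sqrt (4 * Real.sqrt (2 * C) * t - c₀)) * h t * f t
          - 2 * (f t) ^ 2 = C ∧
      -2 * (h t) ^ 2 * (f t) ^ 2 * 0
          + (f t) ^ 3 * h t
            * (2 * Real.sqrt (2 * C) / Real.sqrt (4 * Real.sqrt (2 * C) * t - c₀))
          - 4 * (f t) ^ 4 + 2 * (f t) ^ 2 * (h t) ^ 2 = C * (h t) ^ 2 := by
  intro t ht
  have ha : 0 < Real.sqrt (2 * C) := Real.sqrt_pos.2 (by linarith)
  have hs : 0 < 4 * Real.sqrt (2 * C) * t - c₀ := by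
    have := (div_lt_iff₀ (by linarith : (0:ℝ) < 4 * Real.sqrt (2 * C))).1 ht
    nlinarith
  have hss : 0 < Real.sqrt (4 * Real.sqrt (2 * C) * t - c₀) := Real.sqrt_pos.2 hs
  have hfsq : f t ^ 2 = C / 2 := by rw [hf]; exact Real.sq_sqrt (by linarith)
  have hf2 : Real.sqrt (2 * C) * f t = C := by
    rw [hf, ← Real.sqrt_mul (by linarith : (0:ℝ) ≤ 2 * C)]
    rw [show 2 * C * (C / 2) = C ^ 2 by ring, Real.sqrt_sq hC.le]
  have hhpos : 0 < h t := by rw [hh]; exact hss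
  have hhne : h t ≠ 0 := hhpos.ne'
  have h3 : 2 * Real.sqrt (2 * C) * f t ^ 3 = C ^ 2 := by
    calc 2 * Real.sqrt (2 * C) * f t ^ 3
        = 2 * (Real.sqrt (2 * C) * f t) * f t ^ 2 := by ring
      _ = 2 * C * (C / 2) := by rw [hf2, hfsq]
      _ = C ^ 2 := by ring
  refine ⟨?_, ?_, ?_⟩
  · rw [funext hh]
    have hinner : HasDerivAt (fun t : ℝ => 4 * Real.sqrt (2 * C) * t - c₀)
        (4 * Real.sqrt (2 * C)) t := by
      simpa using ((hasDerivAt_id t).const_mul (4 * Real.sqrt (2 * C))).sub_const c₀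
    have := (Real.hasDerivAt_sqrt hs.ne').comp t hinner
    refine this.congr_deriv ?_
    field_simp
    ring
  · rw [← hh t]
    rw [show 2 * Real.sqrt (2 * C) / h t * h t * f t
        = 2 * Real.sqrt (2 * C) * f t * (h t / h t) by ring,
      div_self hhne, mul_one]
    linear_combination 2 * hf2 - 2 * hfsq
  · rw [← hh t]
    rw [show f t ^ 3 * h t * (2 * Real.sqrt (2 * C) / h t)
        = 2 * Real.sqrt (2 * C) * f t ^ 3 * (h t / h t) by ring,
      div_self hhne, mul_one]
    linear_combination h3 + (2 * h t ^ 2 - 4 * f t ^ 2 - 2 * C) * hfsq
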